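/- For every n ≥ 3, every element w_n ∈ V_n^* can be written as a finite product w_n = ∏_{j=1}^{k} g_j a_j g_j^{−1}, where each a_j belongs to the set V_n = {λ_{in}, λ_{in}^{−1}, λ_{ni}, λ_{ni}^{−1} : 1 ≤ i ≤ n−1} and each g_j belongs to the image ι_n(VP_{n−1}). -/

import Mathlib

/-- Generators of the pure virtual braid group `VP n`: ordered pairs of distinct
indices, the pair `(i, j)` corresponding to the generator `λ_{ij}`. -/
def Gen (n : ℕ) : Type := {p : Fin n × Fin n // p.1 ≠ p.2}

instance (n : ℕ) : DecidableEq (Gen n) :=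
  fun a b => decidable_of_iff (a.1 = b.1) Subtype.ext_iff.symm

/-- The generator `λ_{ij}` inside the free group on the generators. -/
def lamF {n : ℕ} {i j : Fin n} (h : i ≠ j) : FreeGroup (Gen n) :=
  FreeGroup.of ⟨(i, j), h⟩

/-- `s(ab) = 1` if `a < b`, and `-1` otherwise. -/
def sgn {n : ℕ} (a b : Fin n) : ℤ := if a < b then 1 else -1

/-- The defining relators of the pure virtual braid group `VP n`:
(1) `λ_{jk} λ_{im} = λ_{im} λ_{jk}` for pairwise distinct `i, j, k, m`;
(2) `λ_{ki}^{s(ki)} λ_{kj}^{s(kj)} λ_{ij}^{s(ij)} = λ_{ij}^{s(ij)} λ_{kj}^{s(kj)} λ_{ki}^{s(ki)}`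
for pairwise distinct `i, j, k`. -/
def vpRels (n : ℕ) : Set (FreeGroup (Gen n)) :=
  {r | ∃ (i j k m : Fin n) (hjk : j ≠ k) (him : i ≠ m),
      i ≠ j ∧ i ≠ k ∧ j ≠ m ∧ k ≠ m ∧
      r = lamF hjk * lamF him * (lamF hjk)⁻¹ * (lamF him)⁻¹} ∪
  {r | ∃ (i j k : Fin n) (hki : k ≠ i) (hkj : k ≠ j) (hij : i ≠ j),
      r = (lamF hki ^ sgn k i * lamF hkj ^ sgn k j * lamF hij ^ sgn i j) *
          (lamF hij ^ sgn i j * lamF hkj ^ sgn k j * lamF hki ^ sgn k i)⁻¹}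

/-- The pure virtual braid group on `n` strands, as a presented group. -/
abbrev VP (n : ℕ) : Type := PresentedGroup (vpRels n)

/-- The generator `λ_{ij}` of `VP n`. -/
def lam {n : ℕ} {i j : Fin n} (h : i ≠ j) : VP n := PresentedGroup.of ⟨(i, j), h⟩

/-- The order-preserving inclusion of indices `{1,…,n−1} ⊆ {1,…,n}`. -/
def emb (n : ℕ) : Fin (n - 1) → Fin n := Fin.castLE (Nat.sub_le n 1)

/-- The last index `n` (in one-based numbering) of `Fin n`. -/
def lastIdx (n : ℕ) (hn : 0 < n) : Fin n := ⟨n - 1, by omega⟩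

/-- The set `{λ_{in}, λ_{ni} : 1 ≤ i ≤ n−1}` whose normal closure is `V_n^*`. -/
def VstarSet (n : ℕ) (hn : 0 < n) : Set (VP n) :=
  {x | ∃ (i : Fin n) (hi : i ≠ lastIdx n hn), x = lam hi ∨ x = lam hi.symm}

/-- For `n ≥ 3`, every `w ∈ V_n^*` is a finite product `∏_{j=1}^{k} g_j a_j g_j⁻¹` with each
`a_j ∈ V_n = {λ_{in}^{±1}, λ_{ni}^{±1} : 1 ≤ i ≤ n−1}` and each `g_j` in the image of the
inclusion `ι_n : VP (n-1) →* VP n` (determined by `λ_{ij} ↦ λ_{ij}`). -/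
theorem stmt_4 (n : ℕ) (hn : 3 ≤ n) (ι : VP (n - 1) →* VP n)
    (hι : ∀ (a b : Fin (n - 1)) (hab : a ≠ b) (hab' : emb n a ≠ emb n b),
      ι (lam hab) = lam hab')
    (w : VP n) (hw : w ∈ Subgroup.normalClosure (VstarSet n (by omega))) :
    ∃ (k : ℕ) (g a : Fin k → VP n),
      (∀ j, g j ∈ ι.range) ∧
      (∀ j, a j ∈ VstarSet n (by omega) ∪ (Inv.inv '' VstarSet n (by omega))) ∧
      w = (List.ofFn fun j => g j * a j * (g j)⁻¹).prod := by
  classical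
  have hn' : (0 : ℕ) < n := by omega
  set S : Set (VP n) := VstarSet n hn' with hS
  set A : Set (VP n) := S ∪ (Inv.inv '' S) with hAdef
  -- A is closed under inverses
  have hA_inv : ∀ a ∈ A, a⁻¹ ∈ A := by
    rintro a (ha | ⟨s, hs, rfl⟩)
    · exact Or.inr ⟨a, ha, rfl⟩
    · rw [inv_inv]; exact Or.inl hs
  -- the set of conjugates
  set C : Set (VP n) := {x | ∃ g, g ∈ ι.range ∧ ∃ a ∈ A, x = g * a * g⁻¹} with hCdef
  have hC_inv : ∀ c ∈ C, c⁻¹ ∈ C := by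
    rintro c ⟨g, hg, a, ha, rfl⟩
    exact ⟨g, hg, a⁻¹, hA_inv a ha, by group⟩
  set H : Subgroup (VP n) := Subgroup.closure C with hHdef
  have hS_C : S ⊆ C := fun s hs => ⟨1, one_mem _, s, Or.inl hs, by group⟩
  have hS_H : S ⊆ H := fun s hs => Subgroup.subset_closure (hS_C hs)
  -- conjugation by elements of range ι preserves H
  have hconj : ∀ g' ∈ ι.range, ∀ x ∈ H, g' * x * g'⁻¹ ∈ H := by
    intro g' hg' x hx
    induction hx using Subgroup.closure_induction with
    | mem c hc =>
      obtain ⟨g, hg, a, ha, rfl⟩ := hc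
      refine Subgroup.subset_closure ⟨g' * g, mul_mem hg' hg, a, ha, by group⟩
    | one => simpa using one_mem H
    | mul y z _ _ hy hz =>
      have : g' * (y * z) * g'⁻¹ = (g' * y * g'⁻¹) * (g' * z * g'⁻¹) := by group
      rw [this]; exact mul_mem hy hz
    | inv y _ hy =>
      have : g' * y⁻¹ * g'⁻¹ = (g' * y * g'⁻¹)⁻¹ := by group
      rw [this]; exact inv_mem hy
  have hrange_norm : ∀ g' ∈ ι.range, g' ∈ Subgroup.normalizer (H : Set (VP n)) := by
    intro g' hg'
    rw [Subgroup.mem_normalizer_iff]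
    intro x
    constructor
    · exact hconj g' hg' x
    · intro hx
      have := hconj g'⁻¹ (inv_mem hg') _ hx
      simpa [mul_assoc] using this
  -- every generator of VP n is in the normalizer of H
  have hgen_norm : ∀ p : Gen n, (PresentedGroup.of p : VP n) ∈ Subgroup.normalizer (H : Set (VP n)) := by
    rintro ⟨⟨i, j⟩, hij⟩
    by_cases hiL : i = lastIdx n hn'
    · -- generator is λ_{n i}, in S
      subst hiL
      have hj : j ≠ lastIdx n hn' := fun h => hij h.symm
      have : (PresentedGroup.of ⟨(lastIdx n hn', j), hij⟩ : VP n) ∈ S :=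
        ⟨j, hj, Or.inr rfl⟩
      exact Subgroup.le_normalizer (hS_H this)
    · by_cases hjL : j = lastIdx n hn'
      · subst hjL
        have : (PresentedGroup.of ⟨(i, lastIdx n hn'), hij⟩ : VP n) ∈ S :=
          ⟨i, hij, Or.inl rfl⟩
        exact Subgroup.le_normalizer (hS_H this)
      · -- generator is in the range of ι
        have hlast : ((lastIdx n hn' : Fin n) : ℕ) = n - 1 := rfl
        have hi' : (i : ℕ) < n - 1 := by
          have := i.isLt
          rcases Nat.lt_or_ge (i : ℕ) (n - 1) with h | h
          · exact h
          · exact absurd (Fin.ext (by omega)) hiL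
        have hj' : (j : ℕ) < n - 1 := by
          have := j.isLt
          rcases Nat.lt_or_ge (j : ℕ) (n - 1) with h | h
          · exact h
          · exact absurd (Fin.ext (by omega)) hjL
        set a : Fin (n - 1) := ⟨i, hi'⟩
        set b : Fin (n - 1) := ⟨j, hj'⟩
        have hab : a ≠ b := by
          intro h
          exact hij (Fin.ext (show (i : ℕ) = (j : ℕ) from congrArg (Fin.val : Fin (n - 1) → ℕ) h))
        have hea : emb n a = i := Fin.ext rfl
        have heb : emb n b = j := Fin.ext rfl
        have hab' : emb n a ≠ emb n b := by rw [hea, heb]; exact hij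
        have hkey : ι (lam hab) = lam hab' := hι a b hab hab'
        have : lam hab' = (PresentedGroup.of ⟨(i, j), hij⟩ : VP n) := rfl
        refine hrange_norm _ ⟨lam hab, by rw [hkey, this]⟩
  have hH_norm : H.Normal := by
    rw [← Subgroup.normalizer_eq_top_iff]
    rw [eq_top_iff, ← PresentedGroup.closure_range_of (vpRels n)]
    refine Subgroup.closure_le _ |>.mpr ?_
    rintro x ⟨p, rfl⟩
    exact hgen_norm p
  have hwH : w ∈ H := by
    haveI := hH_norm
    exact Subgroup.normalClosure_le_normal hS_H hw
  -- decompose w as a product of a list of elements of C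
  have hwM : w ∈ Submonoid.closure C := by
    have := Subgroup.closure_toSubmonoid C
    have hCC : C ∪ C⁻¹ = C := by
      ext x
      constructor
      · rintro (h | h)
        · exact h
        · simpa using hC_inv x⁻¹ h
      · exact Or.inl
    have : H.toSubmonoid = Submonoid.closure C := by
      rw [hHdef, Subgroup.closure_toSubmonoid, hCC]
    rw [← this]
    exact hwH
  obtain ⟨l, hl, hlprod⟩ := Submonoid.exists_list_of_mem_closure hwM
  have hmem : ∀ j : Fin l.length, l.get j ∈ C := fun j => hl (l.get j) (l.get_mem j)
  choose g hg a ha hspec using hmem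
  refine ⟨l.length, g, a, hg, ha, ?_⟩
  rw [← hlprod]
  congr 1
  refine List.ext_get (by simp) ?_
  intro i h1 h2
  simp only [List.get_ofFn]
  exact hspec ⟨i, h1⟩
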